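/- In any optimal solution maximizing the total traffic rate TR(p) = Σ_i μT_i/(T_i+μ), for every source s_i either all users of s_i choose the direct path (u_i = n_i) or no user relays through s_i (v_i = 0), or both. -/
import Mathlib


open Finset

/-- A pure routing profile in the loss network with `m` sources, where source `i`
has `n i` users: `u i` users at source `i` choose the direct path, and `r i j`
users at source `i` relay through source `j` (indirect path `(s_i, s_j, d)`). -/
structure Profile (m : ℕ) (n : Fin m → ℕ) where
  u : Fin m → ℕ
  r : Fin m → Fin m → ℕ
  diag : ∀ i, r i i = 0
  total : ∀ i, u i + ∑ j, r i j = n i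

namespace Profile

variable {m : ℕ} {n : Fin m → ℕ}

/-- Number of users relaying through source `j`. -/
def v (p : Profile m n) (j : Fin m) : ℕ := ∑ i, p.r i j

/-- Traffic rate on the direct link `(s_i, d)`: `T_i = u_i φ + v_i q̄ φ`,
where `q̄` is the sidelink success probability. -/
noncomputable def T (φ qb : ℝ) (p : Profile m n) (i : Fin m) : ℝ :=
  (p.u i : ℝ) * φ + (p.v i : ℝ) * qb * φ

/-- Total traffic rate arriving at the destination: `TR = Σ_i μ T_i/(T_i + μ)`. -/
noncomputable def TR (φ qb μ : ℝ) (p : Profile m n) : ℝ :=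
  ∑ i, μ * p.T φ qb i / (p.T φ qb i + μ)

/-- Nash equilibrium: no single user can strictly decrease its loss rate by a
unilateral change of route.  A direct user at `s_i` (present iff `u i > 0`) may
deviate to the indirect path via any `j ≠ i`; a user at `s_i` relaying via `l`
(present iff `r i l > 0`) may deviate to its direct path or to the indirect path
via any other `j`.  Loss rates follow the loss-network formulas, with the traffic
of the target link adjusted for the deviating user's own flow. -/
noncomputable def isNE (φ q μ : ℝ) (p : Profile m n) : Prop :=
  (∀ i j : Fin m, j ≠ i → 0 < p.u i →
      φ * p.T φ (1 - q) i / (p.T φ (1 - q) i + μ) ≤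
        q * φ + (1 - q) * φ * (p.T φ (1 - q) j + (1 - q) * φ) /
          (p.T φ (1 - q) j + (1 - q) * φ + μ)) ∧
  (∀ i l : Fin m, l ≠ i → 0 < p.r i l →
      (q * φ + (1 - q) * φ * p.T φ (1 - q) l / (p.T φ (1 - q) l + μ) ≤
        φ * (p.T φ (1 - q) i + φ) / (p.T φ (1 - q) i + φ + μ)) ∧
      (∀ j : Fin m, j ≠ i → j ≠ l →
        q * φ + (1 - q) * φ * p.T φ (1 - q) l / (p.T φ (1 - q) l + μ) ≤
          q * φ + (1 - q) * φ * (p.T φ (1 - q) j + (1 - q) * φ) /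
            (p.T φ (1 - q) j + (1 - q) * φ + μ)))

end Profile

/-- In any optimal solution maximizing the total traffic rate, for every source
`s_i` either all its users choose the direct path (`u i = n i`) or no user relays
through it (`v i = 0`), or both. -/

private lemma frac_lt {μ x y : ℝ} (hμ : 0 < μ) (hx : 0 ≤ x) (hxy : x < y) :
    μ * x / (x + μ) < μ * y / (y + μ) := by
  have hx' : 0 < x + μ := by linarith
  have hy' : 0 < y + μ := by linarith
  rw [div_lt_div_iff₀ hx' hy']
  nlinarith [mul_lt_mul_of_pos_left hxy (mul_pos hμ hμ)]

private lemma sum_change_one {α : Type*} [Fintype α] [DecidableEq α]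
    (F G : α → ℕ) (j : α) (h : ∀ a, a ≠ j → F a = G a) :
    ∑ a, F a + G j = ∑ a, G a + F j := by
  have h1 := Finset.add_sum_erase Finset.univ F (Finset.mem_univ j)
  have h2 := Finset.add_sum_erase Finset.univ G (Finset.mem_univ j)
  have h3 : ∑ a ∈ Finset.univ.erase j, F a = ∑ a ∈ Finset.univ.erase j, G a :=
    Finset.sum_congr rfl fun a ha => h a (Finset.ne_of_mem_erase ha)
  omega

private lemma sum_change_two {α : Type*} [Fintype α] [DecidableEq α]
    (F G : α → ℕ) (i j : α) (hij : i ≠ j)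
    (h : ∀ a, a ≠ i → a ≠ j → F a = G a) :
    ∑ a, F a + G i + G j = ∑ a, G a + F i + F j := by
  have hj : j ∈ Finset.univ.erase i := Finset.mem_erase.mpr ⟨hij.symm, Finset.mem_univ j⟩
  have h1 := Finset.add_sum_erase Finset.univ F (Finset.mem_univ i)
  have h2 := Finset.add_sum_erase Finset.univ G (Finset.mem_univ i)
  have h3 := Finset.add_sum_erase (Finset.univ.erase i) F hj
  have h4 := Finset.add_sum_erase (Finset.univ.erase i) G hj
  have h5 : ∑ a ∈ (Finset.univ.erase i).erase j, F a
      = ∑ a ∈ (Finset.univ.erase i).erase j, G a :=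
    Finset.sum_congr rfl fun a ha =>
      h a (Finset.ne_of_mem_erase (Finset.mem_of_mem_erase ha)) (Finset.ne_of_mem_erase ha)
  omega

theorem opt_direct_or_no_relay {m : ℕ} {n : Fin m → ℕ} (φ μ q : ℝ)
    (hφ : 0 < φ) (hμ : 0 < μ) (hq0 : 0 < q) (hq1 : q ≤ 1)
    (p : Profile m n)
    (hopt : ∀ p' : Profile m n, p'.TR φ (1 - q) μ ≤ p.TR φ (1 - q) μ) :
    ∀ i : Fin m, p.u i = n i ∨ p.v i = 0 := by
  intro i
  by_contra hcon
  push_neg at hcon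
  obtain ⟨hui, hvi⟩ := hcon
  have hqb0 : (0:ℝ) ≤ 1 - q := by linarith
  have hTnn : ∀ k, 0 ≤ p.T φ (1 - q) k := by
    intro k
    unfold Profile.T
    positivity
  have hδ : (0:ℝ) < φ - (1 - q) * φ := by nlinarith
  -- find l with r i l ≠ 0
  have hsum : ∑ b, p.r i b ≠ 0 := by
    have := p.total i
    intro h; exact hui (by omega)
  obtain ⟨l, hlmem, hl⟩ := Finset.exists_ne_zero_of_sum_ne_zero hsum
  clear hlmem
  have hli : l ≠ i := by
    intro h; rw [h] at hl; exact hl (p.diag i)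
  have hl1 : 1 ≤ p.r i l := Nat.one_le_iff_ne_zero.mpr hl
  -- find j with r j i ≠ 0
  obtain ⟨j, hjmem, hj⟩ := Finset.exists_ne_zero_of_sum_ne_zero (show ∑ a, p.r a i ≠ 0 from hvi)
  clear hjmem
  have hji : j ≠ i := by
    intro h; rw [h] at hj; exact hj (p.diag i)
  have hj1 : 1 ≤ p.r j i := Nat.one_le_iff_ne_zero.mpr hj
  by_cases hjl : j = l
  · -- Case B : j = l; move the relaying user at i and the one at j both to direct
    rw [← hjl] at hl1
    set rI : Fin m → ℕ := Function.update (p.r i) j (p.r i j - 1) with hrI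
    set rJ : Fin m → ℕ := Function.update (p.r j) i (p.r j i - 1) with hrJ
    obtain ⟨p', hpu, hpr⟩ : ∃ p' : Profile m n,
        p'.u = Function.update (Function.update p.u i (p.u i + 1)) j (p.u j + 1) ∧
        p'.r = Function.update (Function.update p.r i rI) j rJ :=
      ⟨{ u := Function.update (Function.update p.u i (p.u i + 1)) j (p.u j + 1)
         r := Function.update (Function.update p.r i rI) j rJ
         diag := by
          intro c
          by_cases hcj : c = j
          · rw [hcj]
            simp [hrJ, Function.update_of_ne hji, p.diag]
          · by_cases hci : c = i
            · rw [hci]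
              simp [Function.update_of_ne hji.symm, hrI, p.diag]
            · simp [Function.update_of_ne hcj, Function.update_of_ne hci, p.diag]
         total := by
          intro c
          by_cases hcj : c = j
          · rw [hcj]
            have key := sum_change_one rJ (p.r j) i
              (fun b hb => by rw [hrJ, Function.update_of_ne hb])
            rw [show rJ i = p.r j i - 1 by rw [hrJ, Function.update_self]] at key
            have h3 := p.total j
            simp only [Function.update_self]
            omega
          · by_cases hci : c = i
            · rw [hci]
              have key := sum_change_one rI (p.r i) j
                (fun b hb => by rw [hrI, Function.update_of_ne hb])
              rw [show rI j = p.r i j - 1 by rw [hrI, Function.update_self]] at key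
              have h3 := p.total i
              simp only [Function.update_of_ne hji.symm, Function.update_self]
              omega
            · simp only [Function.update_of_ne hcj, Function.update_of_ne hci]
              exact p.total c }, rfl, rfl⟩
    have E1 : ∀ b, b ≠ j → p'.r i b = p.r i b := by
      intro b hb
      simp [hpr, hrI, Function.update_of_ne hji.symm, Function.update_of_ne hb]
    have E2 : ∀ b, b ≠ i → p'.r j b = p.r j b := by
      intro b hb
      simp [hpr, hrJ, Function.update_of_ne hb]
    have E3 : ∀ a b, a ≠ i → a ≠ j → p'.r a b = p.r a b := by
      intro a b hai haj
      simp [hpr, Function.update_of_ne haj, Function.update_of_ne hai]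
    have E4 : p'.r i j = p.r i j - 1 := by
      simp [hpr, hrI, Function.update_of_ne hji.symm]
    have E5 : p'.r j i = p.r j i - 1 := by
      simp [hpr, hrJ]
    have vI : p'.v i + 1 = p.v i := by
      have key := sum_change_one (fun a => p'.r a i) (fun a => p.r a i) j
        (fun a ha => by
          by_cases hai : a = i
          · rw [hai]; exact E1 i hji.symm
          · exact E3 a i hai ha)
      simp only [E5] at key
      unfold Profile.v
      omega
    have vJ : p'.v j + 1 = p.v j := by
      have key := sum_change_one (fun a => p'.r a j) (fun a => p.r a j) i
        (fun a ha => by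
          by_cases haj : a = j
          · rw [haj]; exact E2 j hji
          · exact E3 a j ha haj)
      simp only [E4] at key
      unfold Profile.v
      omega
    have vK : ∀ k, k ≠ i → k ≠ j → p'.v k = p.v k := by
      intro k hki hkj
      unfold Profile.v
      refine Finset.sum_congr rfl fun a _ => ?_
      by_cases hai : a = i
      · rw [hai]; exact E1 k hkj
      · by_cases haj : a = j
        · rw [haj]; exact E2 k hki
        · exact E3 a k hai haj
    have uI : p'.u i = p.u i + 1 := by
      simp [hpu, Function.update_of_ne hji.symm]
    have uJ : p'.u j = p.u j + 1 := by
      simp [hpu]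
    have uK : ∀ k, k ≠ i → k ≠ j → p'.u k = p.u k := by
      intro k hki hkj
      simp [hpu, Function.update_of_ne hkj, Function.update_of_ne hki]
    have TI : p'.T φ (1 - q) i = p.T φ (1 - q) i + (φ - (1 - q) * φ) := by
      unfold Profile.T
      rw [uI, show ((p'.v i : ℕ) : ℝ) = (p.v i : ℝ) - 1 by rw [← vI]; push_cast; ring]
      push_cast
      ring
    have TJ : p'.T φ (1 - q) j = p.T φ (1 - q) j + (φ - (1 - q) * φ) := by
      unfold Profile.T
      rw [uJ, show ((p'.v j : ℕ) : ℝ) = (p.v j : ℝ) - 1 by rw [← vJ]; push_cast; ring]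
      push_cast
      ring
    have TK : ∀ k, k ≠ i → k ≠ j → p'.T φ (1 - q) k = p.T φ (1 - q) k := by
      intro k hki hkj
      unfold Profile.T
      rw [uK k hki hkj, vK k hki hkj]
    have hlt : p.TR φ (1 - q) μ < p'.TR φ (1 - q) μ := by
      unfold Profile.TR
      apply Finset.sum_lt_sum
      · intro k _
        by_cases hki : k = i
        · rw [hki, TI]
          exact le_of_lt (frac_lt hμ (hTnn i) (by linarith))
        · by_cases hkj : k = j
          · rw [hkj, TJ]
            exact le_of_lt (frac_lt hμ (hTnn j) (by linarith))
          · rw [TK k hki hkj]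
      · exact ⟨i, Finset.mem_univ i, by
          rw [TI]; exact frac_lt hμ (hTnn i) (by linarith)⟩
    exact absurd (hopt p') (not_le.mpr hlt)
  · -- Case A : j ≠ l; move the user at i relaying via l to direct,
    -- and reroute the user at j relaying via i to relay via l instead
    set rI : Fin m → ℕ := Function.update (p.r i) l (p.r i l - 1) with hrI
    set rJ : Fin m → ℕ :=
      Function.update (Function.update (p.r j) i (p.r j i - 1)) l (p.r j l + 1) with hrJ
    obtain ⟨p', hpu, hpr⟩ : ∃ p' : Profile m n,
        p'.u = Function.update p.u i (p.u i + 1) ∧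
        p'.r = Function.update (Function.update p.r i rI) j rJ :=
      ⟨{ u := Function.update p.u i (p.u i + 1)
         r := Function.update (Function.update p.r i rI) j rJ
         diag := by
          intro c
          by_cases hcj : c = j
          · rw [hcj]
            simp [hrJ, Function.update_of_ne hjl, Function.update_of_ne hji, p.diag]
          · by_cases hci : c = i
            · rw [hci]
              simp [Function.update_of_ne hji.symm, hrI, Function.update_of_ne hli.symm, p.diag]
            · simp [Function.update_of_ne hcj, Function.update_of_ne hci, p.diag]
         total := by
          intro c
          by_cases hcj : c = j
          · rw [hcj]
            have key := sum_change_two rJ (p.r j) i l hli.symm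
              (fun b hbi hbl => by
                rw [hrJ, Function.update_of_ne hbl, Function.update_of_ne hbi])
            rw [show rJ i = p.r j i - 1 by
                  rw [hrJ, Function.update_of_ne hli.symm, Function.update_self],
                show rJ l = p.r j l + 1 by rw [hrJ, Function.update_self]] at key
            have h3 := p.total j
            simp only [Function.update_of_ne hji, Function.update_self]
            omega
          · by_cases hci : c = i
            · rw [hci]
              have key := sum_change_one rI (p.r i) l
                (fun b hb => by rw [hrI, Function.update_of_ne hb])
              rw [show rI l = p.r i l - 1 by rw [hrI, Function.update_self]] at key
              have h3 := p.total i
              simp only [Function.update_of_ne hji.symm, Function.update_self]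
              omega
            · simp only [Function.update_of_ne hcj, Function.update_of_ne hci]
              exact p.total c }, rfl, rfl⟩
    have E1 : ∀ b, b ≠ l → p'.r i b = p.r i b := by
      intro b hb
      simp [hpr, hrI, Function.update_of_ne hji.symm, Function.update_of_ne hb]
    have E2 : p'.r i l = p.r i l - 1 := by
      simp [hpr, hrI, Function.update_of_ne hji.symm]
    have E3 : ∀ b, b ≠ i → b ≠ l → p'.r j b = p.r j b := by
      intro b hbi hbl
      simp [hpr, hrJ, Function.update_of_ne hbl, Function.update_of_ne hbi]
    have E4 : p'.r j i = p.r j i - 1 := by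
      simp [hpr, hrJ, Function.update_of_ne hli.symm]
    have E5 : p'.r j l = p.r j l + 1 := by
      simp [hpr, hrJ]
    have E6 : ∀ a b, a ≠ i → a ≠ j → p'.r a b = p.r a b := by
      intro a b hai haj
      simp [hpr, Function.update_of_ne haj, Function.update_of_ne hai]
    have vI : p'.v i + 1 = p.v i := by
      have key := sum_change_one (fun a => p'.r a i) (fun a => p.r a i) j
        (fun a ha => by
          by_cases hai : a = i
          · rw [hai]; exact E1 i hli.symm
          · exact E6 a i hai ha)
      simp only [E4] at key
      unfold Profile.v
      omega
    have vL : p'.v l = p.v l := by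
      have key := sum_change_two (fun a => p'.r a l) (fun a => p.r a l) i j hji.symm
        (fun a hai haj => E6 a l hai haj)
      simp only [E2, E5] at key
      unfold Profile.v
      omega
    have vK : ∀ k, k ≠ i → k ≠ l → p'.v k = p.v k := by
      intro k hki hkl
      unfold Profile.v
      refine Finset.sum_congr rfl fun a _ => ?_
      by_cases hai : a = i
      · rw [hai]; exact E1 k hkl
      · by_cases haj : a = j
        · rw [haj]; exact E3 k hki hkl
        · exact E6 a k hai haj
    have uI : p'.u i = p.u i + 1 := by
      simp [hpu]
    have uK : ∀ k, k ≠ i → p'.u k = p.u k := by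
      intro k hki
      simp [hpu, Function.update_of_ne hki]
    have TI : p'.T φ (1 - q) i = p.T φ (1 - q) i + (φ - (1 - q) * φ) := by
      unfold Profile.T
      rw [uI, show ((p'.v i : ℕ) : ℝ) = (p.v i : ℝ) - 1 by rw [← vI]; push_cast; ring]
      push_cast
      ring
    have TK : ∀ k, k ≠ i → p'.T φ (1 - q) k = p.T φ (1 - q) k := by
      intro k hki
      unfold Profile.T
      by_cases hkl : k = l
      · rw [hkl, uK l (hkl ▸ hki), vL]
      · rw [uK k hki, vK k hki hkl]
    have hlt : p.TR φ (1 - q) μ < p'.TR φ (1 - q) μ := by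
      unfold Profile.TR
      apply Finset.sum_lt_sum
      · intro k _
        by_cases hki : k = i
        · rw [hki, TI]
          exact le_of_lt (frac_lt hμ (hTnn i) (by linarith))
        · rw [TK k hki]
      · exact ⟨i, Finset.mem_univ i, by
          rw [TI]; exact frac_lt hμ (hTnn i) (by linarith)⟩
    exact absurd (hopt p') (not_le.mpr hlt)
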